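/- For the series with terms x_{2n-1} = (0, (-1)^n/n) and x_{2n} = ((-1)^n/n, 0) for n ∈ ℕ, the set of Levy vectors equals {(0,-1), (-1,0), (0,1), (1,0)}. -/

import Mathlib

open Filter Topology

/-- Euclidean norm on the plane `ℝ × ℝ`. -/
noncomputable def enorm2 (v : ℝ × ℝ) : ℝ := Real.sqrt (v.1 ^ 2 + v.2 ^ 2)

/-- Euclidean inner product on the plane. -/
def dot2 (u v : ℝ × ℝ) : ℝ := u.1 * v.1 + u.2 * v.2

/-- `u` is a Levy vector of the series `∑ x n`: `u` is a unit vector and for every `ε > 0`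
the sum of norms of the terms lying in the cone `S_ε(u)` diverges. -/
noncomputable def IsLevy (x : ℕ → ℝ × ℝ) (u : ℝ × ℝ) : Prop :=
  enorm2 u = 1 ∧ ∀ ε : ℝ, 0 < ε → ¬ Summable (fun n =>
    if (1 - ε) * enorm2 u * enorm2 (x n) ≤ dot2 u (x n) then enorm2 (x n) else 0)

/-- The series `∑ x n` converges (in the given order) to `s`. -/
def ConvergesTo (x : ℕ → ℝ × ℝ) (s : ℝ × ℝ) : Prop :=
  Tendsto (fun N => ∑ n ∈ Finset.range N, x n) atTop (𝓝 s)

/-- The series `∑ x n` is conditionally convergent. -/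
noncomputable def CondConv (x : ℕ → ℝ × ℝ) : Prop :=
  (∃ s, ConvergesTo x s) ∧ ¬ Summable (fun n => enorm2 (x n))

/-- `s` belongs to the achievement set `A(x)`. -/
def Achieves (x : ℕ → ℝ × ℝ) (s : ℝ × ℝ) : Prop :=
  ∃ E : Set ℕ, ConvergesTo (Set.indicator E x) s

/-- `s` belongs to the absolute achievement set `A_abs(x)`. -/
noncomputable def AchievesAbs (x : ℕ → ℝ × ℝ) (s : ℝ × ℝ) : Prop :=
  ∃ E : Set ℕ, Summable (fun n => enorm2 (Set.indicator E x n)) ∧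
    HasSum (Set.indicator E x) s

/-- The reduction property of a series `∑ (x n, y n)`. -/
noncomputable def ReductionProperty (x y : ℕ → ℝ) : Prop :=
  Tendsto (fun n => |y n| / |x n|) atTop atTop ∧
  ∀ ε : ℝ, 0 < ε → ∀ t ∈ Set.Ioo (-ε) ε, ∀ N : ℕ,
    ∃ m : ℕ, ∃ k : ℕ → ℕ, 0 < m ∧ StrictMono k ∧ N ≤ k 0 ∧
      |(∑ i ∈ Finset.range m, x (k i)) - t| < ε / 2 ∧
      ∀ j : ℕ, 1 ≤ j → j ≤ m →
        |∑ i ∈ Finset.range j, x (k i)| < ε ∧ |∑ i ∈ Finset.range j, y (k i)| < ε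

lemma enorm2_fst (t : ℝ) : enorm2 (t, 0) = |t| := by
  simp [enorm2, Real.sqrt_sq_eq_abs]

lemma enorm2_snd (t : ℝ) : enorm2 (0, t) = |t| := by
  simp [enorm2, Real.sqrt_sq_eq_abs]

lemma notsum2 : ¬ Summable (fun k : ℕ => 1 / (2 * (k : ℝ) + 2)) := by
  intro h
  have h3 : Summable (fun k : ℕ => 1 / ((k : ℝ) + 1)) := by
    refine (h.mul_left 2).congr fun k => ?_
    have hk : (0:ℝ) < 2 * k + 2 := by positivity
    field_simp
  have h4 : Summable (fun k : ℕ => 1 / ((k + 1 : ℕ) : ℝ)) := by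
    refine h3.congr fun k => ?_
    push_cast; ring
  exact Real.not_summable_one_div_natCast ((summable_nat_add_iff 1).mp h4)

lemma notsum1 : ¬ Summable (fun k : ℕ => 1 / (2 * (k : ℝ) + 1)) := by
  intro h
  refine notsum2 (Summable.of_nonneg_of_le (fun k => by positivity) (fun k => ?_) h)
  have h1 : (0:ℝ) < 2 * k + 1 := by positivity
  have h2 : (2:ℝ) * k + 1 ≤ 2 * k + 2 := by linarith
  exact one_div_le_one_div_of_le h1 h2

lemma levy_of (x : ℕ → ℝ × ℝ) (u : ℝ × ℝ) (hu : enorm2 u = 1)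
    (g : ℕ → ℕ) (hg : Function.Injective g) (c : ℕ → ℝ)
    (hx : ∀ k, enorm2 (x (g k)) = c k ∧ dot2 u (x (g k)) = c k ∧ 0 ≤ c k)
    (hc : ¬ Summable c) : IsLevy x u := by
  refine ⟨hu, fun ε hε hs => hc ?_⟩
  refine (hs.comp_injective hg).congr fun k => ?_
  obtain ⟨he, hd, hcc⟩ := hx k
  simp only [Function.comp_apply, he, hd, hu]
  rw [if_pos (by nlinarith)]

lemma cone_miss (a M s : ℝ) (ha : |a| ≤ M) (hM : M < 1) (hs : s ≠ 0) :
    a * s < (1 - (1 - M) / 2) * 1 * |s| := by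
  have h1 : a * s ≤ |a| * |s| := by
    calc a * s ≤ |a * s| := le_abs_self _
    _ = |a| * |s| := abs_mul a s
  have h2 : 0 < |s| := abs_pos.mpr hs
  nlinarith
theorem stmt_4 (x : ℕ → ℝ × ℝ)
    (h1 : ∀ n : ℕ, 1 ≤ n → x (2 * n - 1) = (0, (-1 : ℝ) ^ n / n))
    (h2 : ∀ n : ℕ, 1 ≤ n → x (2 * n) = ((-1 : ℝ) ^ n / n, 0)) :
    {u : ℝ × ℝ | IsLevy x u} =
      {((0 : ℝ), (-1 : ℝ)), ((-1 : ℝ), (0 : ℝ)), ((0 : ℝ), (1 : ℝ)), ((1 : ℝ), (0 : ℝ))} := by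
  ext u
  simp only [Set.mem_setOf_eq, Set.mem_insert_iff, Set.mem_singleton_iff]
  constructor
  · intro hL
    obtain ⟨hu, hdiv⟩ := hL
    have hsq : u.1 ^ 2 + u.2 ^ 2 = 1 := Real.sqrt_eq_one.mp hu
    by_contra hne
    push_neg at hne
    obtain ⟨hne1, hne2, hne3, hne4⟩ := hne
    have habs1 : |u.1| < 1 := by
      rcases lt_or_ge |u.1| 1 with h | h
      · exact h
      · exfalso
        have h2z : u.2 ^ 2 ≤ 0 := by nlinarith [sq_abs u.1]
        have hz : u.2 = 0 := by nlinarith [sq_nonneg u.2]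
        have h1sq : u.1 ^ 2 = 1 := by nlinarith
        have : (u.1 - 1) * (u.1 + 1) = 0 := by nlinarith
        rcases mul_eq_zero.mp this with h' | h'
        · exact hne4 (Prod.ext (show u.1 = 1 by linarith) (show u.2 = 0 from hz))
        · exact hne2 (Prod.ext (show u.1 = -1 by linarith) (show u.2 = 0 from hz))
    have habs2 : |u.2| < 1 := by
      rcases lt_or_ge |u.2| 1 with h | h
      · exact h
      · exfalso
        have h2z : u.1 ^ 2 ≤ 0 := by nlinarith [sq_abs u.2]
        have hz : u.1 = 0 := by nlinarith [sq_nonneg u.1]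
        have h1sq : u.2 ^ 2 = 1 := by nlinarith
        have : (u.2 - 1) * (u.2 + 1) = 0 := by nlinarith
        rcases mul_eq_zero.mp this with h' | h'
        · exact hne3 (Prod.ext (show u.1 = 0 from hz) (show u.2 = 1 by linarith))
        · exact hne1 (Prod.ext (show u.1 = 0 from hz) (show u.2 = -1 by linarith))
    set M := max |u.1| |u.2| with hMdef
    have hM : M < 1 := max_lt habs1 habs2
    refine absurd ?_ (hdiv ((1 - M) / 2) (by linarith))
    apply summable_of_ne_finset_zero (s := {0})
    intro n hn
    have hn1 : 1 ≤ n := by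
      rcases Nat.eq_zero_or_pos n with h | h
      · exact absurd (h ▸ Finset.mem_singleton_self 0) (h ▸ hn)
      · exact h
    rw [if_neg]
    rw [not_le, hu]
    rcases Nat.even_or_odd n with ⟨j, hj⟩ | ⟨j, hj⟩
    · have hj1 : 1 ≤ j := by omega
      have hjpos : (0:ℝ) < (j:ℝ) := by exact_mod_cast hj1
      have hxn : x n = ((-1 : ℝ) ^ j / (j : ℝ), 0) := by
        rw [show n = 2 * j by omega]; exact h2 j hj1
      have hs0 : (-1 : ℝ) ^ j / (j : ℝ) ≠ 0 :=
        div_ne_zero (pow_ne_zero _ (by norm_num)) (ne_of_gt hjpos)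
      rw [hxn, enorm2_fst]
      have hd : dot2 u ((-1 : ℝ) ^ j / (j : ℝ), 0) = u.1 * ((-1 : ℝ) ^ j / (j : ℝ)) := by
        simp [dot2]
      rw [hd]
      exact cone_miss _ _ _ (le_max_left _ _) hM hs0
    · have hj1 : 1 ≤ j + 1 := by omega
      have hjpos : (0:ℝ) < ((j + 1 : ℕ) : ℝ) := by exact_mod_cast hj1
      have hxn : x n = (0, (-1 : ℝ) ^ (j + 1) / ((j + 1 : ℕ) : ℝ)) := by
        rw [show n = 2 * (j + 1) - 1 by omega]; exact h1 (j + 1) hj1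
      have hs0 : (-1 : ℝ) ^ (j + 1) / ((j + 1 : ℕ) : ℝ) ≠ 0 :=
        div_ne_zero (pow_ne_zero _ (by norm_num)) (ne_of_gt hjpos)
      rw [hxn, enorm2_snd]
      have hd : dot2 u (0, (-1 : ℝ) ^ (j + 1) / ((j + 1 : ℕ) : ℝ))
          = u.2 * ((-1 : ℝ) ^ (j + 1) / ((j + 1 : ℕ) : ℝ)) := by
        simp [dot2]
      rw [hd]
      exact cone_miss _ _ _ (le_max_right _ _) hM hs0
  · rintro (rfl | rfl | rfl | rfl)
    · -- u = (0, -1) : odd m = 2k+1, n = 4k+1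
      refine levy_of x _ (by norm_num [enorm2]) (fun k => 4 * k + 1)
        (fun a b h => by simp only [] at h; omega) (fun k => 1 / (2 * (k : ℝ) + 1)) (fun k => ?_) notsum1
      have hxn : x (4 * k + 1) = (0, -(1 / (2 * (k : ℝ) + 1))) := by
        rw [show 4 * k + 1 = 2 * (2 * k + 1) - 1 by omega, h1 (2 * k + 1) (by omega)]
        have : (-1 : ℝ) ^ (2 * k + 1) = -1 := Odd.neg_one_pow ⟨k, by ring⟩
        rw [this]
        push_cast
        rw [Prod.mk.injEq]
        constructor <;> ring
      have hp : (0:ℝ) < 1 / (2 * (k : ℝ) + 1) := by positivity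
      refine ⟨?_, ?_, le_of_lt hp⟩
      · rw [hxn, enorm2_snd, abs_neg, abs_of_pos hp]
      · rw [hxn]; simp [dot2]
    · -- u = (-1, 0) : odd m = 2k+1, n = 4k+2
      refine levy_of x _ (by norm_num [enorm2]) (fun k => 4 * k + 2)
        (fun a b h => by simp only [] at h; omega) (fun k => 1 / (2 * (k : ℝ) + 1)) (fun k => ?_) notsum1
      have hxn : x (4 * k + 2) = (-(1 / (2 * (k : ℝ) + 1)), 0) := by
        rw [show 4 * k + 2 = 2 * (2 * k + 1) by omega, h2 (2 * k + 1) (by omega)]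
        have : (-1 : ℝ) ^ (2 * k + 1) = -1 := Odd.neg_one_pow ⟨k, by ring⟩
        rw [this]
        push_cast
        rw [Prod.mk.injEq]
        constructor <;> ring
      have hp : (0:ℝ) < 1 / (2 * (k : ℝ) + 1) := by positivity
      refine ⟨?_, ?_, le_of_lt hp⟩
      · rw [hxn, enorm2_fst, abs_neg, abs_of_pos hp]
      · rw [hxn]; simp [dot2]
    · -- u = (0, 1) : even m = 2k+2, n = 4k+3
      refine levy_of x _ (by norm_num [enorm2]) (fun k => 4 * k + 3)
        (fun a b h => by simp only [] at h; omega) (fun k => 1 / (2 * (k : ℝ) + 2)) (fun k => ?_) notsum2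
      have hxn : x (4 * k + 3) = (0, 1 / (2 * (k : ℝ) + 2)) := by
        rw [show 4 * k + 3 = 2 * (2 * k + 2) - 1 by omega, h1 (2 * k + 2) (by omega)]
        have : (-1 : ℝ) ^ (2 * k + 2) = 1 := Even.neg_one_pow ⟨k + 1, by ring⟩
        rw [this]
        push_cast
        rw [Prod.mk.injEq]
        constructor <;> ring
      have hp : (0:ℝ) < 1 / (2 * (k : ℝ) + 2) := by positivity
      refine ⟨?_, ?_, le_of_lt hp⟩
      · rw [hxn, enorm2_snd, abs_of_pos hp]
      · rw [hxn]; simp [dot2]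
    · -- u = (1, 0) : even m = 2k+2, n = 4k+4
      refine levy_of x _ (by norm_num [enorm2]) (fun k => 4 * k + 4)
        (fun a b h => by simp only [] at h; omega) (fun k => 1 / (2 * (k : ℝ) + 2)) (fun k => ?_) notsum2
      have hxn : x (4 * k + 4) = (1 / (2 * (k : ℝ) + 2), 0) := by
        rw [show 4 * k + 4 = 2 * (2 * k + 2) by omega, h2 (2 * k + 2) (by omega)]
        have : (-1 : ℝ) ^ (2 * k + 2) = 1 := Even.neg_one_pow ⟨k + 1, by ring⟩
        rw [this]
        push_cast
        rw [Prod.mk.injEq]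
        constructor <;> ring
      have hp : (0:ℝ) < 1 / (2 * (k : ℝ) + 2) := by positivity
      refine ⟨?_, ?_, le_of_lt hp⟩
      · rw [hxn, enorm2_fst, abs_of_pos hp]
      · rw [hxn]; simp [dot2]
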